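/- Let $T \in \mathbb{R}^{N \times M}$ have nonnegative entries with row sums $\mu_n > 0$ and column sums $\nu_m > 0$, where $\sum_n \mu_n = \sum_m \nu_m = 1$. Then for any matrices $D_s \in \mathbb{R}^{N \times M}$ and $G_1 \in \mathbb{R}^{N \times N}$, $G_2 \in \mathbb{R}^{M \times M}$, the quadratic Gromov cost satisfies $\sum_{n,n',m,m'} (g_{1,nn'} - g_{2,mm'})^2 t_{nm} t_{n'm'} = \langle (G_1 \odot G_1)\mu \mathbf{1}_M^\top + \mathbf{1}_N \nu^\top (G_2 \odot G_2)^\top - 2 G_1 T G_2^\top, \; T \rangle$, where $\odot$ is the Hadamard product and $\langle A, B \rangle = \sum_{ij} a_{ij} b_{ij}$. -/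
import Mathlib

theorem gw_quadratic_cost_matrix_identity (N M : ℕ)
    (T : Matrix (Fin N) (Fin M) ℝ) (hT : ∀ n m, 0 ≤ T n m)
    (μ : Fin N → ℝ) (ν : Fin M → ℝ)
    (hμpos : ∀ n, 0 < μ n) (hνpos : ∀ m, 0 < ν m)
    (hrow : ∀ n, ∑ m, T n m = μ n) (hcol : ∀ m, ∑ n, T n m = ν m)
    (hμsum : ∑ n, μ n = 1) (hνsum : ∑ m, ν m = 1)
    (Ds : Matrix (Fin N) (Fin M) ℝ)
    (G₁ : Matrix (Fin N) (Fin N) ℝ) (G₂ : Matrix (Fin M) (Fin M) ℝ) :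
    (∑ n, ∑ n', ∑ m, ∑ m', (G₁ n n' - G₂ m m') ^ 2 * T n m * T n' m') =
      ∑ n, ∑ m,
        (((G₁.map (fun a => a * a)).mulVec μ n) +
          ((G₂.map (fun a => a * a)).mulVec ν m) -
          2 * (G₁ * T * G₂.transpose) n m) * T n m := by
  have hA : (∑ n, ∑ n', ∑ m, ∑ m', G₁ n n' ^ 2 * T n m * T n' m') =
      ∑ n, ∑ m, ((G₁.map (fun a => a * a)).mulVec μ n) * T n m := by
    simp only [Matrix.mulVec, dotProduct, Matrix.map_apply, ← hrow,
      Finset.mul_sum, Finset.sum_mul]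
    refine Finset.sum_congr rfl fun n _ => ?_
    rw [Finset.sum_comm]
    refine Finset.sum_congr rfl fun m _ => Finset.sum_congr rfl fun n' _ =>
      Finset.sum_congr rfl fun m' _ => by ring
  have hB : (∑ n, ∑ n', ∑ m, ∑ m', G₂ m m' ^ 2 * T n m * T n' m') =
      ∑ n, ∑ m, ((G₂.map (fun a => a * a)).mulVec ν m) * T n m := by
    simp only [Matrix.mulVec, dotProduct, Matrix.map_apply, ← hcol,
      Finset.mul_sum, Finset.sum_mul]
    refine Finset.sum_congr rfl fun n _ => ?_
    rw [Finset.sum_comm]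
    refine Finset.sum_congr rfl fun m _ => ?_
    rw [Finset.sum_comm]
    refine Finset.sum_congr rfl fun m' _ => Finset.sum_congr rfl fun n' _ => by ring
  have hC : (∑ n, ∑ n', ∑ m, ∑ m', (2 * (G₁ n n' * G₂ m m')) * T n m * T n' m') =
      ∑ n, ∑ m, (2 * (G₁ * T * G₂.transpose) n m) * T n m := by
    simp only [Matrix.mul_apply, Matrix.transpose_apply, Finset.mul_sum, Finset.sum_mul]
    refine Finset.sum_congr rfl fun n _ => ?_
    rw [Finset.sum_comm]
    refine Finset.sum_congr rfl fun m _ => ?_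
    rw [Finset.sum_comm]
    refine Finset.sum_congr rfl fun m' _ => Finset.sum_congr rfl fun n' _ => by ring
  have expand : (∑ n, ∑ n', ∑ m, ∑ m', (G₁ n n' - G₂ m m') ^ 2 * T n m * T n' m') =
      (∑ n, ∑ n', ∑ m, ∑ m', G₁ n n' ^ 2 * T n m * T n' m') +
      (∑ n, ∑ n', ∑ m, ∑ m', G₂ m m' ^ 2 * T n m * T n' m') -
      (∑ n, ∑ n', ∑ m, ∑ m', (2 * (G₁ n n' * G₂ m m')) * T n m * T n' m') := by
    simp only [← Finset.sum_add_distrib, ← Finset.sum_sub_distrib]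
    refine Finset.sum_congr rfl fun n _ => Finset.sum_congr rfl fun n' _ =>
      Finset.sum_congr rfl fun m _ => Finset.sum_congr rfl fun m' _ => by ring
  rw [expand, hA, hB, hC]
  simp only [← Finset.sum_add_distrib, ← Finset.sum_sub_distrib]
  refine Finset.sum_congr rfl fun n _ => Finset.sum_congr rfl fun m _ => by ring
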